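/- Let f : A + C → B + C be a morphism in the category of sets (or any extensive category with finite colimits). Form the pushout Q of (1_A + ∇_C) : A + C + C → A + C along (f + 1_C) : A + C + C → B + C + C, followed by (1_B + ∇_C) : B + C + C → B + C; this is the composite in Cospan of A ↔ A+C+C ↔ B+C+C ↔ B built from η_C, f⃗ + C, ε_C. In Set, the resulting colimit object is the set of orbits of A + B + C under the identifications generated by x ∼ f(x) when traversing C (i.e., the quotient of A+B+C by the equivalence relation generated by c ∼ f(inr c) for c ∈ C and a ∼ f(inl a) identified across the two copies of C). -/

import Mathlib

open CategoryTheory Limits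

/-- For sets `A, B, C` and `f : A + C → B + C`, the cospan composite
`A ↔ A+C+C ↔ B+C+C ↔ B` built from `η_C`, `f⃗ + C`, `ε_C` (computed by successive
pushouts as in the monoidal colimit construction) has as its apex the set of orbits:
the quotient of `A + B + C` by the equivalence relation generated by `z ~ f z`
(viewing `A + C` and `B + C` inside `A + B + C`). -/
theorem monoidal_colimit_orbits {A B C : Type} (f : A ⊕ C → B ⊕ C) :
    -- the three legs of the composable cospans, as maps in `Type`
    let g₁ : (A ⊕ C) ⊕ C ⟶ (A ⊕ C : Type) := TypeCat.ofHom (Sum.elim id Sum.inr)          -- `1_A + ∇_C`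
    let g₂ : (A ⊕ C) ⊕ C ⟶ ((B ⊕ C) ⊕ C : Type) := TypeCat.ofHom (Sum.map f id)          -- `f + 1_C`
    let g₃ : (B ⊕ C) ⊕ C ⟶ (B ⊕ C : Type) := TypeCat.ofHom (Sum.elim id Sum.inr)          -- `1_B + ∇_C`
    -- composite by successive pushouts
    let Q := pushout (pushout.inr g₁ g₂) g₃
    -- the quotient of `A + B + C` by the relation generated by `z ~ f z`
    let emb₁ : A ⊕ C → (A ⊕ B) ⊕ C := Sum.map Sum.inl id
    let emb₂ : B ⊕ C → (A ⊕ B) ⊕ C := Sum.map Sum.inr id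
    let Q' := Quot (fun z w => ∃ u : A ⊕ C, z = emb₁ u ∧ w = emb₂ (f u))
    Nonempty (Q ≃ Q') := by
  intro g₁ g₂ g₃ Q emb₁ emb₂ Q'
  set r : (A ⊕ B) ⊕ C → (A ⊕ B) ⊕ C → Prop :=
    fun z w => ∃ u : A ⊕ C, z = emb₁ u ∧ w = emb₂ (f u) with hr
  -- forward map
  have cond1 : g₁ ≫ (TypeCat.ofHom (fun u => Quot.mk r (emb₁ u)) : (A ⊕ C) ⟶ Q')
      = g₂ ≫ (TypeCat.ofHom (fun v => Quot.mk r (emb₂ (g₃ v))) : ((B ⊕ C) ⊕ C) ⟶ Q') := by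
    ext x
    cases x with
    | inl u =>
      exact Quot.sound ⟨u, rfl, rfl⟩
    | inr c => rfl
  let h₁ : pushout g₁ g₂ ⟶ Q' := pushout.desc _ _ cond1
  have cond2 : pushout.inr g₁ g₂ ≫ h₁
      = g₃ ≫ (TypeCat.ofHom (fun v => Quot.mk r (emb₂ v)) : (B ⊕ C) ⟶ Q') := by
    simp [h₁]
    ext v
    exact ConcreteCategory.congr_hom (pushout.inr_desc _ _ cond1) v
  let F : Q ⟶ Q' := pushout.desc h₁ _ cond2
  -- backward map
  let G0 : (A ⊕ B) ⊕ C → Q := fun x =>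
    match x with
    | .inl (.inl a) => pushout.inl (pushout.inr g₁ g₂) g₃ (pushout.inl g₁ g₂ (Sum.inl a))
    | .inl (.inr b) => pushout.inr (pushout.inr g₁ g₂) g₃ (Sum.inl b)
    | .inr c => pushout.inr (pushout.inr g₁ g₂) g₃ (Sum.inr c)
  -- key: image of P.inl u in Q equals ιB (f u), and also mainterpretation
  have keyP : ∀ u : A ⊕ C, pushout.inl g₁ g₂ u
      = pushout.inr g₁ g₂ (Sum.inl (f u)) := by
    intro u
    have := ConcreteCategory.congr_hom (pushout.condition (f := g₁) (g := g₂)) (Sum.inl u : (A ⊕ C) ⊕ C)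
    simpa [g₁, g₂] using this
  have keyC : ∀ c : C, pushout.inl g₁ g₂ (Sum.inr c)
      = pushout.inr g₁ g₂ (Sum.inr c) := by
    intro c
    have := ConcreteCategory.congr_hom (pushout.condition (f := g₁) (g := g₂)) (Sum.inr c : (A ⊕ C) ⊕ C)
    simpa [g₁, g₂] using this
  have keyQ : ∀ v : (B ⊕ C) ⊕ C,
      pushout.inl (pushout.inr g₁ g₂) g₃ (pushout.inr g₁ g₂ v)
      = pushout.inr (pushout.inr g₁ g₂) g₃ (g₃ v) := by
    intro v
    exact ConcreteCategory.congr_hom (pushout.condition (f := pushout.inr g₁ g₂) (g := g₃)) v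
  -- G0 of B⊕C embedded via emb₂ is ιB
  have G0emb₂ : ∀ v : B ⊕ C, G0 (emb₂ v) = pushout.inr _ g₃ v := by
    rintro (b | c) <;> rfl
  have G0sound : ∀ z w, r z w → G0 z = G0 w := by
    rintro z w ⟨u, rfl, rfl⟩
    rw [G0emb₂]
    cases u with
    | inl a =>
      show pushout.inl (pushout.inr g₁ g₂) g₃ (pushout.inl g₁ g₂ (Sum.inl a)) = _
      rw [keyP (Sum.inl a), keyQ]
      rfl
    | inr c =>
      show pushout.inr (pushout.inr g₁ g₂) g₃ (Sum.inr c)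
          = pushout.inr (pushout.inr g₁ g₂) g₃ (f (Sum.inr c))
      calc pushout.inr (pushout.inr g₁ g₂) g₃ (Sum.inr c)
          = pushout.inl (pushout.inr g₁ g₂) g₃ (pushout.inr g₁ g₂ (Sum.inr c)) :=
            (keyQ (Sum.inr c)).symm
        _ = pushout.inl (pushout.inr g₁ g₂) g₃ (pushout.inl g₁ g₂ (Sum.inr c)) := by
            rw [keyC]
        _ = pushout.inl (pushout.inr g₁ g₂) g₃ (pushout.inr g₁ g₂ (Sum.inl (f (Sum.inr c)))) := by
            rw [keyP]
        _ = pushout.inr (pushout.inr g₁ g₂) g₃ (f (Sum.inr c)) := keyQ (Sum.inl (f (Sum.inr c)))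
  let G : Q' → Q := Quot.lift G0 G0sound
  -- F after the inclusions, elementwise
  have Finl : ∀ p : pushout g₁ g₂, F (pushout.inl _ g₃ p) = h₁ p := by
    intro p
    exact ConcreteCategory.congr_hom (pushout.inl_desc (f := pushout.inr g₁ g₂) (g := g₃) h₁ _ cond2) p
  have Finr : ∀ v : B ⊕ C, F (pushout.inr (pushout.inr g₁ g₂) _ v) = Quot.mk r (emb₂ v) := by
    intro v
    exact ConcreteCategory.congr_hom (pushout.inr_desc (f := pushout.inr g₁ g₂) (g := g₃) h₁ _ cond2) v
  have h₁inl : ∀ u : A ⊕ C, h₁ (pushout.inl g₁ g₂ u) = Quot.mk r (emb₁ u) := by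
    intro u
    exact ConcreteCategory.congr_hom (pushout.inl_desc (f := g₁) (g := g₂) _ _ cond1) u
  have h₁inr : ∀ v : (B ⊕ C) ⊕ C, h₁ (pushout.inr g₁ g₂ v) = Quot.mk r (emb₂ (g₃ v)) := by
    intro v
    exact ConcreteCategory.congr_hom (pushout.inr_desc (f := g₁) (g := g₂) _ _ cond1) v
  refine ⟨⟨F, G, ?_, ?_⟩⟩
  · -- left inverse: G (F q) = q
    have : F ≫ (TypeCat.ofHom G : Q' ⟶ Q) = 𝟙 Q := by
      apply pushout.hom_ext
      · apply pushout.hom_ext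
        · ext u
          show G (F (pushout.inl _ g₃ (pushout.inl g₁ g₂ u)))
              = pushout.inl _ g₃ (pushout.inl g₁ g₂ u)
          rw [Finl, h₁inl]
          cases u with
          | inl a => rfl
          | inr c =>
            show pushout.inr (pushout.inr g₁ g₂) g₃ (Sum.inr c) = _
            exact (keyQ (Sum.inr c)).symm.trans
              (congrArg (pushout.inl (pushout.inr g₁ g₂) g₃) (keyC c).symm)
        · ext v
          show G (F (pushout.inl _ g₃ (pushout.inr g₁ g₂ v)))
              = pushout.inl _ g₃ (pushout.inr g₁ g₂ v)
          rw [Finl, h₁inr]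
          show G0 (emb₂ (g₃ v)) = _
          rw [G0emb₂, keyQ v]
      · ext v
        show G (F (pushout.inr (pushout.inr g₁ g₂) g₃ v))
            = pushout.inr (pushout.inr g₁ g₂) g₃ v
        rw [Finr]
        show G0 (emb₂ v) = _
        rw [G0emb₂]
    intro q
    exact ConcreteCategory.congr_hom this q
  · -- right inverse: F (G q') = q'
    rintro ⟨x⟩
    show F (G0 x) = Quot.mk r x
    match x with
    | .inl (.inl a) =>
      show F (pushout.inl _ g₃ (pushout.inl g₁ g₂ (Sum.inl a))) = _
      rw [Finl, h₁inl]
      rfl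
    | .inl (.inr b) =>
      show F (pushout.inr (pushout.inr g₁ g₂) g₃ (Sum.inl b)) = _
      rw [Finr]
      rfl
    | .inr c =>
      show F (pushout.inr (pushout.inr g₁ g₂) g₃ (Sum.inr c)) = _
      rw [Finr]
      rfl
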